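/- Let n ≥ 2, let a, b : Fin n → ℝ be strictly positive tuples, and let p ≠ 0 be real. Suppose the induction hypothesis: for any two strictly positive m-tuples (2 ≤ m ≤ n) the main inequality holds. Then combining the last two entries via (a_n^p + a_{n+1}^p)^(1/p) and (b_n^p + b_{n+1}^p)^(1/p) yields: ((∑_{k<n+1} (a k)^p)/(∑_{k<n+1} (b k)^p))^(1/p) < ∑_{k<n+1} (a k)/(b k). In particular, (a_n^p + a_{n+1}^p)^(1/p) / (b_n^p + b_{n+1}^p)^(1/p) < a_n/b_n + a_{n+1}/b_{n+1}. -/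

import Mathlib

theorem stmt_19 (n : ℕ) (hn : 2 ≤ n) (a b : Fin (n + 1) → ℝ)
    (ha : ∀ k, 0 < a k) (hb : ∀ k, 0 < b k) (p : ℝ) (hp : p ≠ 0)
    (IH : ∀ m : ℕ, 2 ≤ m → m ≤ n → ∀ a' b' : Fin m → ℝ,
      (∀ k, 0 < a' k) → (∀ k, 0 < b' k) →
      ((∑ k, (a' k) ^ p) / (∑ k, (b' k) ^ p)) ^ (1 / p) < ∑ k, a' k / b' k) :
    ((∑ k, (a k) ^ p) / (∑ k, (b k) ^ p)) ^ (1 / p) < ∑ k, a k / b k ∧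
      ((a (Fin.last n - 1)) ^ p + (a (Fin.last n)) ^ p) ^ (1 / p) /
          ((b (Fin.last n - 1)) ^ p + (b (Fin.last n)) ^ p) ^ (1 / p) <
        a (Fin.last n - 1) / b (Fin.last n - 1) + a (Fin.last n) / b (Fin.last n) := by
  obtain ⟨m, rfl⟩ : ∃ m, n = m + 2 := ⟨n - 2, by omega⟩
  have hi1 : Fin.last (m + 2) - 1 = ((Fin.last (m + 1)).castSucc : Fin (m + 3)) := by
    ext
    simp only [Fin.sub_def, Fin.last, Fin.castSucc, Fin.val_one, Fin.castAdd, Fin.castLE]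
    rw [show m + 2 + 1 - 1 + (m + 2) = (m + 2 + 1) + (m + 1) by omega]
    rw [Nat.add_mod_left, Nat.mod_eq_of_lt (by omega)]
  set i1 : Fin (m + 3) := Fin.last (m + 2) - 1 with hi1def
  set i2 : Fin (m + 3) := Fin.last (m + 2) with hi2def
  have hca : (0 : ℝ) < (a i1) ^ p + (a i2) ^ p := by
    have := Real.rpow_pos_of_pos (ha i1) p
    have := Real.rpow_pos_of_pos (ha i2) p
    linarith
  have hcb : (0 : ℝ) < (b i1) ^ p + (b i2) ^ p := by
    have := Real.rpow_pos_of_pos (hb i1) p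
    have := Real.rpow_pos_of_pos (hb i2) p
    linarith
  -- second conjunct
  have h2 : ((a i1) ^ p + (a i2) ^ p) ^ (1 / p) / ((b i1) ^ p + (b i2) ^ p) ^ (1 / p) <
      a i1 / b i1 + a i2 / b i2 := by
    have := IH 2 le_rfl (by omega) ![a i1, a i2] ![b i1, b i2]
      (by intro k; fin_cases k <;> simp [ha]) (by intro k; fin_cases k <;> simp [hb])
    simp only [Fin.sum_univ_two, Matrix.cons_val_zero, Matrix.cons_val_one, Matrix.head_cons]
      at this
    rwa [Real.div_rpow hca.le hcb.le] at this
  refine ⟨?_, h2⟩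
  -- combined tuples
  set A : Fin (m + 2) → ℝ :=
    Fin.snoc (fun k : Fin (m + 1) => a k.castSucc.castSucc) (((a i1) ^ p + (a i2) ^ p) ^ (1 / p))
    with hA
  set B : Fin (m + 2) → ℝ :=
    Fin.snoc (fun k : Fin (m + 1) => b k.castSucc.castSucc) (((b i1) ^ p + (b i2) ^ p) ^ (1 / p))
    with hB
  have hApos : ∀ k, 0 < A k := by
    intro k
    induction k using Fin.lastCases with
    | last => simpa [hA] using Real.rpow_pos_of_pos hca _
    | cast k => simpa [hA] using ha _
  have hBpos : ∀ k, 0 < B k := by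
    intro k
    induction k using Fin.lastCases with
    | last => simpa [hB] using Real.rpow_pos_of_pos hcb _
    | cast k => simpa [hB] using hb _
  have key : ∀ (f : Fin (m + 3) → ℝ) (c : ℝ), ((f i1) ^ p + (f i2) ^ p) = c →
      ∑ k : Fin (m + 3), (f k) ^ p =
        ∑ k : Fin (m + 1), (f k.castSucc.castSucc) ^ p + c := by
    intro f c hc
    rw [Fin.sum_univ_castSucc (f := fun k : Fin (m + 2 + 1) => (f k) ^ p),
      Fin.sum_univ_castSucc (f := fun k : Fin (m + 1 + 1) => (f k.castSucc) ^ p), ← hc, hi1]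
    ring
  have hsa : ∑ k : Fin (m + 2), (A k) ^ p = ∑ k : Fin (m + 3), (a k) ^ p := by
    rw [key a ((a i1) ^ p + (a i2) ^ p) rfl,
      Fin.sum_univ_castSucc (f := fun k : Fin (m + 1 + 1) => (A k) ^ p)]
    simp only [hA, Fin.snoc_castSucc, Fin.snoc_last]
    rw [one_div, Real.rpow_inv_rpow hca.le hp]
  have hsb : ∑ k : Fin (m + 2), (B k) ^ p = ∑ k : Fin (m + 3), (b k) ^ p := by
    rw [key b ((b i1) ^ p + (b i2) ^ p) rfl,
      Fin.sum_univ_castSucc (f := fun k : Fin (m + 1 + 1) => (B k) ^ p)]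
    simp only [hB, Fin.snoc_castSucc, Fin.snoc_last]
    rw [one_div, Real.rpow_inv_rpow hcb.le hp]
  have hmain := IH (m + 2) (by omega) le_rfl A B hApos hBpos
  rw [hsa, hsb] at hmain
  refine hmain.trans ?_
  have hAB : ∑ k : Fin (m + 2), A k / B k =
      ∑ k : Fin (m + 1), a k.castSucc.castSucc / b k.castSucc.castSucc +
        ((a i1) ^ p + (a i2) ^ p) ^ (1 / p) / ((b i1) ^ p + (b i2) ^ p) ^ (1 / p) := by
    rw [Fin.sum_univ_castSucc (f := fun k : Fin (m + 1 + 1) => A k / B k)]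
    simp only [hA, hB, Fin.snoc_castSucc, Fin.snoc_last]
  have hab : ∑ k : Fin (m + 3), a k / b k =
      ∑ k : Fin (m + 1), a k.castSucc.castSucc / b k.castSucc.castSucc +
        (a i1 / b i1 + a i2 / b i2) := by
    rw [Fin.sum_univ_castSucc (f := fun k : Fin (m + 2 + 1) => a k / b k),
      Fin.sum_univ_castSucc (f := fun k : Fin (m + 1 + 1) => a k.castSucc / b k.castSucc), hi1]
    ring
  rw [hAB, hab]
  exact add_lt_add_right h2 _
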